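/- Assume K ≥ n where n = |V|. A representation ℓ ∈ Rep is the left-most representation (i.e., ℓ ≤ ℓ'' pointwise for every ℓ'' ∈ Rep) if and only if there is no vertex v ∈ V such that the function ℓ' defined by ℓ'(v) = ℓ(v) − ε and ℓ'(u) = ℓ(u) for all u ≠ v belongs to Rep. -/

import Mathlib

/-- A unit interval representation of `G`: distinct vertices are adjacent iff their
points are at distance at most `1`. -/
def IsUIRep {V : Type*} (G : SimpleGraph V) (ℓ : V → ℝ) : Prop :=
  ∀ u v : V, u ≠ v → (G.Adj u v ↔ |ℓ u - ℓ v| ≤ 1)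

/-- Two vertices are indistinguishable if they have the same closed neighborhood. -/
def Indist {V : Type*} (G : SimpleGraph V) (u v : V) : Prop :=
  ∀ w : V, (w = u ∨ G.Adj u w) ↔ (w = v ∨ G.Adj v w)

/-- `GridRep G lt K lbound ℓ`: `ℓ` belongs to `Rep(G, <, ε, lbound)` for `ε = 1/K`,
i.e. it is an `ε`-grid unit interval representation of `G` whose left-to-right order
extends `lt` and which satisfies the lower bounds. -/
def GridRep {V : Type*} (G : SimpleGraph V) (lt : V → V → Prop) (K : ℕ) (lbound : V → ℝ)
    (ℓ : V → ℝ) : Prop :=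
  IsUIRep G ℓ ∧ (∀ v : V, ∃ m : ℤ, ℓ v = m * (1 / (K : ℝ))) ∧
    (∀ u v : V, lt u v → ℓ u ≤ ℓ v) ∧ (∀ v : V, lbound v ≤ ℓ v)

lemma grid_lt {K : ℕ} (hK : 0 < K) {a b : ℝ} (ha : ∃ m : ℤ, a = m * (1 / (K : ℝ)))
    (hb : ∃ m : ℤ, b = m * (1 / (K : ℝ))) (h : a < b) : a + 1 / (K : ℝ) ≤ b := by
  obtain ⟨p, rfl⟩ := ha
  obtain ⟨q, rfl⟩ := hb
  have hε : (0 : ℝ) < 1 / (K : ℝ) := by positivity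
  have hpq : p < q := by
    by_contra hc
    push_neg at hc
    have : (q : ℝ) ≤ (p : ℝ) := by exact_mod_cast hc
    nlinarith
  have h1 : (p : ℝ) + 1 ≤ (q : ℝ) := by exact_mod_cast hpq
  nlinarith

lemma grid_add_one {K : ℕ} (hK : 0 < K) {a : ℝ} (ha : ∃ m : ℤ, a = m * (1 / (K : ℝ))) :
    ∃ m : ℤ, a + 1 = m * (1 / (K : ℝ)) := by
  obtain ⟨p, rfl⟩ := ha
  refine ⟨p + K, ?_⟩
  have hKR : (K : ℝ) ≠ 0 := Nat.cast_ne_zero.mpr hK.ne'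
  push_cast
  field_simp

lemma key_witness {V : Type*} [DecidableEq V] (G : SimpleGraph V) (lt : V → V → Prop)
    (hcomp : ∀ u v : V, ¬ Indist G u v → lt u v ∨ lt v u)
    (K : ℕ) (hK : 0 < K) (lbound : V → ℝ) (ℓ ℓ'' : V → ℝ)
    (hℓ : GridRep G lt K lbound ℓ) (hℓ'' : GridRep G lt K lbound ℓ'')
    (hno : ¬ ∃ v : V, GridRep G lt K lbound (Function.update ℓ v (ℓ v - 1 / (K : ℝ))))
    (v : V) (hv : ℓ'' v < ℓ v) :
    ∃ u : V, ℓ'' u < ℓ u ∧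
      (ℓ u = ℓ v + 1 ∨ ℓ u = ℓ v - (1 + 1 / (K : ℝ)) ∨ (ℓ u = ℓ v ∧ lt u v)) := by
  classical
  obtain ⟨hUI, hgrid, hord, hlb⟩ := hℓ
  obtain ⟨hUI'', hgrid'', hord'', hlb''⟩ := hℓ''
  set ε : ℝ := 1 / (K : ℝ) with hε_def
  have hεpos : (0 : ℝ) < ε := by positivity
  by_contra hcon
  have hW : ∀ u : V, ℓ'' u < ℓ u →
      ¬ (ℓ u = ℓ v + 1 ∨ ℓ u = ℓ v - (1 + ε) ∨ (ℓ u = ℓ v ∧ lt u v)) :=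
    fun u hu hP => hcon ⟨u, hu, hP⟩
  apply hno
  refine ⟨v, ?_⟩
  have hvε : ℓ'' v + ε ≤ ℓ v := grid_lt hK (hgrid'' v) (hgrid v) hv
  -- the central adjacency check for pairs involving v
  have hpair : ∀ b : V, b ≠ v → (G.Adj v b ↔ |(ℓ v - ε) - ℓ b| ≤ 1) := by
    intro b hb
    have hne : v ≠ b := Ne.symm hb
    constructor
    · intro hadj
      have h1 : |ℓ v - ℓ b| ≤ 1 := (hUI v b hne).mp hadj
      rw [abs_le] at h1 ⊢
      obtain ⟨h1l, h1r⟩ := h1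
      refine ⟨?_, by linarith⟩
      by_contra hc
      push_neg at hc
      -- so ℓ b > ℓ v + 1 - ε ; combined with ℓ b ≤ ℓ v + 1 and grid: ℓ b = ℓ v + 1
      have hble : ℓ b ≤ ℓ v + 1 := by linarith
      have heq : ℓ b = ℓ v + 1 := by
        rcases lt_or_eq_of_le hble with hlt | he
        · exfalso
          have := grid_lt hK (hgrid b) (grid_add_one hK (hgrid v)) hlt
          linarith
        · exact he
      have h2 : |ℓ'' v - ℓ'' b| ≤ 1 := (hUI'' v b hne).mp hadj
      rw [abs_le] at h2
      have hbS : ℓ'' b < ℓ b := by linarith [h2.1]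
      exact hW b hbS (Or.inl heq)
    · intro habs
      by_contra hnadj
      have h1 : ¬ |ℓ v - ℓ b| ≤ 1 := fun hh => hnadj ((hUI v b hne).mpr hh)
      push_neg at h1
      rw [abs_le] at habs
      rcases lt_abs.mp h1 with h1' | h1'
      · -- ℓ v - ℓ b > 1
        have hg : ℓ b + 1 < ℓ v := by linarith
        have hg2 := grid_lt hK (grid_add_one hK (hgrid b)) (hgrid v) hg
        -- ℓ b + 1 + ε ≤ ℓ v ; from habs : ℓ v - ε - ℓ b ≤ 1
        have heq : ℓ b = ℓ v - (1 + ε) := by linarith [habs.2]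
        -- b is a witness
        have hnind : ¬ Indist G v b := by
          intro hind
          rcases (hind b).mpr (Or.inl rfl) with h | h
          · exact hb h
          · exact hnadj h
        have hltbv : lt b v := by
          rcases hcomp v b hnind with h | h
          · exfalso; have := hord v b h; linarith
          · exact h
        have h2 : ¬ |ℓ'' v - ℓ'' b| ≤ 1 := fun hh => hnadj ((hUI'' v b hne).mpr hh)
        push_neg at h2
        have hord2 : ℓ'' b ≤ ℓ'' v := hord'' b v hltbv
        have h3 : 1 < ℓ'' v - ℓ'' b := by
          rcases lt_abs.mp h2 with h | h
          · exact h
          · linarith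
        have hbS : ℓ'' b < ℓ b := by linarith
        exact hW b hbS (Or.inr (Or.inl heq))
      · -- ℓ b - ℓ v > 1, contradicts habs upper part
        exfalso; linarith [habs.1]
  constructor
  · -- IsUIRep
    intro a b hab
    by_cases ha : a = v
    · subst ha
      rw [Function.update_self, Function.update_of_ne (Ne.symm hab)]
      exact hpair b (Ne.symm hab)
    · by_cases hb : b = v
      · subst hb
        rw [Function.update_self, Function.update_of_ne ha]
        rw [G.adj_comm, abs_sub_comm]
        exact hpair a ha
      · rw [Function.update_of_ne ha, Function.update_of_ne hb]
        exact hUI a b hab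
  refine ⟨?_, ?_, ?_⟩
  · -- grid
    intro x
    by_cases hx : x = v
    · subst hx
      rw [Function.update_self]
      obtain ⟨p, hp⟩ := hgrid x
      refine ⟨p - 1, ?_⟩
      rw [hp]; push_cast; ring
    · rw [Function.update_of_ne hx]; exact hgrid x
  · -- order
    intro a b hab
    by_cases ha : a = v
    · subst ha
      by_cases hb : b = a
      · subst hb; exact le_refl _
      · rw [Function.update_self, Function.update_of_ne hb]
        have := hord a b hab
        linarith
    · by_cases hb : b = v
      · subst hb
        rw [Function.update_self, Function.update_of_ne ha]
        have h1 : ℓ a ≤ ℓ b := hord a b hab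
        rcases lt_or_eq_of_le h1 with hlt | heq
        · have := grid_lt hK (hgrid a) (hgrid b) hlt; linarith
        · exfalso
          have hbS : ℓ'' a < ℓ a := by
            have := hord'' a b hab
            linarith
          exact hW a hbS (Or.inr (Or.inr ⟨heq, hab⟩))
      · rw [Function.update_of_ne ha, Function.update_of_ne hb]
        exact hord a b hab
  · -- lbound
    intro x
    by_cases hx : x = v
    · subst hx
      rw [Function.update_self]
      have := hlb'' x
      linarith
    · rw [Function.update_of_ne hx]; exact hlb x

/-- for `K ≥ n`, a representation in `Rep` is the left-most representation
iff no single interval can be shifted to the left by `ε` within `Rep`. -/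
theorem stmt5 {V : Type*} [Fintype V] [DecidableEq V] (G : SimpleGraph V)
    (lt : V → V → Prop)
    (hirr : ∀ v : V, ¬ lt v v)
    (htrans : ∀ a b c : V, lt a b → lt b c → lt a c)
    (hcomp : ∀ u v : V, ¬ Indist G u v → lt u v ∨ lt v u)
    (K : ℕ) (hK : 0 < K) (hKn : Fintype.card V ≤ K) (lbound : V → ℝ)
    (ℓ : V → ℝ) (hℓ : GridRep G lt K lbound ℓ) :
    (∀ ℓ'' : V → ℝ, GridRep G lt K lbound ℓ'' → ∀ v : V, ℓ v ≤ ℓ'' v) ↔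
      ¬ ∃ v : V, GridRep G lt K lbound (Function.update ℓ v (ℓ v - 1 / (K : ℝ))) := by
  classical
  have hεpos : (0 : ℝ) < 1 / (K : ℝ) := by positivity
  constructor
  · rintro hmin ⟨v, hv⟩
    have h := hmin _ hv v
    rw [Function.update_self] at h
    linarith
  · intro hno ℓ'' hℓ'' v₀
    by_contra h0
    push_neg at h0
    -- setup : integer grid values
    set ε : ℝ := 1 / (K : ℝ) with hε_def
    have hεne : ε ≠ 0 := ne_of_gt hεpos
    have hKR : (K : ℝ) ≠ 0 := Nat.cast_ne_zero.mpr hK.ne'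
    have hKε : (K : ℝ) * ε = 1 := by rw [hε_def]; field_simp
    have hgrid := hℓ.2.1
    choose N hN using hgrid
    have cancel : ∀ p q : ℤ, (p : ℝ) * ε = (q : ℝ) * ε → p = q := by
      intro p q h
      have := mul_right_cancel₀ hεne h
      exact_mod_cast this
    -- the witness function
    have key : ∀ v : V, ℓ'' v < ℓ v → ∃ u : V, ℓ'' u < ℓ u ∧
        (ℓ u = ℓ v + 1 ∨ ℓ u = ℓ v - (1 + ε) ∨ (ℓ u = ℓ v ∧ lt u v)) :=
      fun v hv => key_witness G lt hcomp K hK lbound ℓ ℓ'' hℓ hℓ'' hno v hv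
    set f : V → V := fun v => if h : ℓ'' v < ℓ v then (key v h).choose else v with hf_def
    have hstep : ∀ v : V, ℓ'' v < ℓ v → ℓ'' (f v) < ℓ (f v) ∧
        (N (f v) = N v + K ∨ N (f v) = N v - (K + 1) ∨ (N (f v) = N v ∧ lt (f v) v)) := by
      intro v h
      have hfv : f v = (key v h).choose := by rw [hf_def]; simp [h]
      obtain ⟨hS', hcase⟩ := (key v h).choose_spec
      rw [← hfv] at hS' hcase
      refine ⟨hS', ?_⟩
      rcases hcase with c | c | c
      · left
        apply cancel
        have h1 : ((N v + K : ℤ) : ℝ) * ε = (N v : ℝ) * ε + (K : ℝ) * ε := by push_cast; ring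
        rw [h1]
        rw [← hN (f v), ← hN v, hKε, c]
      · right; left
        apply cancel
        have h1 : ((N v - (K + 1) : ℤ) : ℝ) * ε = (N v : ℝ) * ε - ((K : ℝ) * ε + ε) := by
          push_cast; ring
        rw [h1, ← hN (f v), ← hN v, hKε, c]
      · right; right
        refine ⟨cancel _ _ ?_, c.2⟩
        rw [← hN (f v), ← hN v, c.1]
    -- iterates stay in S
    have hS : ∀ i : ℕ, ℓ'' (f^[i] v₀) < ℓ (f^[i] v₀) := by
      intro i
      induction i with
      | zero => simpa using h0
      | succ s ih =>
        rw [Function.iterate_succ_apply']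
        exact (hstep _ ih).1
    -- pigeonhole
    set n := Fintype.card V with hn_def
    obtain ⟨i, j, hij, hval⟩ := Fintype.exists_ne_map_eq_of_card_lt
      (fun i : Fin (n + 1) => f^[(i : ℕ)] v₀) (by simp; omega)
    wlog hlt2 : (i : ℕ) < (j : ℕ) generalizing i j
    · exact this j i hij.symm hval.symm
        (by rcases Fin.lt_or_lt_of_ne hij with h | h
            · omega
            · exact h)
    set m : ℕ := (j : ℕ) - (i : ℕ) with hm_def
    have hm1 : 1 ≤ m := by omega
    have hmn : m ≤ n := by omega
    set w : V := f^[(i : ℕ)] v₀ with hw_def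
    have hcyc : f^[m] w = w := by
      rw [hw_def, ← Function.iterate_add_apply]
      have : m + (i : ℕ) = (j : ℕ) := by omega
      rw [this]
      exact hval.symm
    set c : ℕ → V := fun t => f^[t] w with hc_def
    have hcS : ∀ t : ℕ, ℓ'' (c t) < ℓ (c t) := by
      intro t
      rw [hc_def]
      simp only
      rw [hw_def, ← Function.iterate_add_apply]
      exact hS _
    have hcs : ∀ t : ℕ, c (t + 1) = f (c t) := by
      intro t
      rw [hc_def]
      simp only
      rw [Function.iterate_succ_apply']
    set d : ℕ → ℤ := fun t => N (c (t + 1)) - N (c t) with hd_def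
    have hd : ∀ t : ℕ, d t = K ∨ d t = -((K : ℤ) + 1) ∨ (d t = 0 ∧ lt (c (t + 1)) (c t)) := by
      intro t
      have h2 := (hstep (c t) (hcS t)).2
      rw [← hcs t] at h2
      rcases h2 with h | h | h
      · left; rw [hd_def]; simp only; omega
      · right; left; rw [hd_def]; simp only; omega
      · right; right; exact ⟨by rw [hd_def]; simp only; omega, h.2⟩
    have hsum : ∑ t ∈ Finset.range m, d t = 0 := by
      have := Finset.sum_range_sub (fun t => N (c t)) m
      rw [hd_def]
      simp only
      rw [this]
      have : c m = c 0 := by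
        rw [hc_def]; simp only [Function.iterate_zero_apply]; exact hcyc
      rw [this]
      ring
    -- the counting
    set A : Finset ℕ := (Finset.range m).filter (fun t => d t = (K : ℤ)) with hA_def
    set B : Finset ℕ := ((Finset.range m).filter (fun t => ¬ d t = (K : ℤ))).filter
      (fun t => d t = -((K : ℤ) + 1)) with hB_def
    set C : Finset ℕ := ((Finset.range m).filter (fun t => ¬ d t = (K : ℤ))).filter
      (fun t => ¬ d t = -((K : ℤ) + 1)) with hC_def
    have e1 : ∑ t ∈ A, d t + (∑ t ∈ B, d t + ∑ t ∈ C, d t) = ∑ t ∈ Finset.range m, d t := by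
      rw [hA_def, hB_def, hC_def]
      rw [Finset.sum_filter_add_sum_filter_not
        ((Finset.range m).filter (fun t => ¬ d t = (K : ℤ))) (fun t => d t = -((K : ℤ) + 1)) d]
      exact Finset.sum_filter_add_sum_filter_not (Finset.range m) (fun t => d t = (K : ℤ)) d
    have eA : ∑ t ∈ A, d t = (A.card : ℤ) * K := by
      rw [Finset.sum_congr rfl (fun t ht => (Finset.mem_filter.mp ht).2)]
      rw [Finset.sum_const, nsmul_eq_mul]
    have eB : ∑ t ∈ B, d t = (B.card : ℤ) * (-((K : ℤ) + 1)) := by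
      rw [Finset.sum_congr rfl (fun t ht => (Finset.mem_filter.mp ht).2)]
      rw [Finset.sum_const, nsmul_eq_mul]
    have eC : ∑ t ∈ C, d t = 0 := by
      apply Finset.sum_eq_zero
      intro t ht
      rw [hC_def] at ht
      have h1 := (Finset.mem_filter.mp ht).2
      have h2 := (Finset.mem_filter.mp (Finset.mem_filter.mp ht).1).2
      rcases hd t with h | h | h
      · exact absurd h h2
      · exact absurd h h1
      · exact h.1
    have hmain : (A.card : ℤ) * K = (B.card : ℤ) * ((K : ℤ) + 1) := by
      rw [eA, eB, eC, hsum] at e1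
      linarith
    have hcard : A.card + B.card ≤ m := by
      have h1 : A.card + ((Finset.range m).filter (fun t => ¬ d t = (K : ℤ))).card
          = (Finset.range m).card := by
        rw [hA_def]
        exact Finset.card_filter_add_card_filter_not _
      have h2 : B.card ≤ ((Finset.range m).filter (fun t => ¬ d t = (K : ℤ))).card := by
        rw [hB_def]; exact Finset.card_filter_le _ _
      rw [Finset.card_range] at h1
      omega
    by_cases hb0 : B.card = 0
    · -- all steps are order steps, get a cycle in lt
      have ha0 : A.card = 0 := by
        rw [hb0] at hmain
        simp only [Nat.cast_zero, zero_mul] at hmain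
        rcases mul_eq_zero.mp hmain with h | h
        · exact_mod_cast h
        · exact absurd h (by exact_mod_cast hK.ne')
      have hAe : A = ∅ := Finset.card_eq_zero.mp ha0
      have hBe : B = ∅ := Finset.card_eq_zero.mp hb0
      have hlts : ∀ t, t < m → lt (c (t + 1)) (c t) := by
        intro t ht
        rcases hd t with h | h | h
        · exfalso
          have : t ∈ A := by
            rw [hA_def]; exact Finset.mem_filter.mpr ⟨Finset.mem_range.mpr ht, h⟩
          rw [hAe] at this; exact absurd this (Finset.notMem_empty t)
        · exfalso
          have hKz : (0 : ℤ) < (K : ℤ) := by exact_mod_cast hK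
          have : t ∈ B := by
            rw [hB_def]
            refine Finset.mem_filter.mpr ⟨Finset.mem_filter.mpr
              ⟨Finset.mem_range.mpr ht, ?_⟩, h⟩
            omega
          rw [hBe] at this; exact absurd this (Finset.notMem_empty t)
        · exact h.2
      have hchain : ∀ t, 0 < t → t ≤ m → lt (c t) (c 0) := by
        intro t
        induction t with
        | zero => omega
        | succ s ih =>
          intro _ hsm
          have hstep' := hlts s (by omega)
          rcases Nat.eq_zero_or_pos s with hs | hs
          · rw [hs] at hstep'; simpa [hs] using hstep'
          · exact htrans _ _ _ hstep' (ih hs (by omega))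
      have := hchain m (by omega) le_rfl
      have hcm : c m = c 0 := by
        rw [hc_def]; simp only [Function.iterate_zero_apply]; exact hcyc
      rw [hcm] at this
      exact hirr _ this
    · -- B nonempty : too many steps
      have hmainN : A.card * K = B.card * (K + 1) := by exact_mod_cast hmain
      set a := A.card
      set b := B.card
      have hba : b ≤ a := by
        by_contra hc
        push_neg at hc
        have h1 : a * K < b * K := (Nat.mul_lt_mul_right hK).mpr hc
        have h2 : b * K ≤ b * (K + 1) := Nat.mul_le_mul_left b (by omega)
        omega
      have h3 : (a - b) * K = b := by
        have h4 : (b + (a - b)) * K = b * K + (a - b) * K := Nat.add_mul _ _ _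
        have h5 : b + (a - b) = a := by omega
        rw [h5] at h4
        have h6 : b * (K + 1) = b * K + b := by ring
        omega
      have h7 : 1 ≤ a - b := by
        rcases Nat.eq_zero_or_pos (a - b) with h | h
        · rw [h] at h3; simp at h3; omega
        · omega
      have h8 : K ≤ b := by
        calc K = 1 * K := (one_mul K).symm
        _ ≤ (a - b) * K := Nat.mul_le_mul_right K h7
        _ = b := h3
      omega
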